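/- (Differentiability of the von Neumann divergence in its first argument.) Let X and Y be n×n real symmetric positive definite matrices and H an n×n real symmetric matrix. Then the function φ(t) = D_vN(X + tH ‖ Y) = Tr((X+tH) log(X+tH) − (X+tH) log Y − (X+tH) + Y), defined for t in a neighborhood of 0 where X + tH is positive definite, is differentiable at t = 0 with φ'(0) = Tr(H · (log X − log Y)). -/

import Mathlib

open Matrix Polynomial Set Finset Filter Topology

namespace VNAux

variable {n : Type*} [Fintype n] [DecidableEq n]

/-! ### Conjugation by the eigenvector unitary -/

noncomputable def conj {A : Matrix n n ℝ} (hA : A.IsHermitian) (d : n → ℝ) : Matrix n n ℝ :=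
  (hA.eigenvectorUnitary : Matrix n n ℝ) * diagonal d *
    star (hA.eigenvectorUnitary : Matrix n n ℝ)

variable {A : Matrix n n ℝ} (hA : A.IsHermitian)

lemma conj_congr {d e : n → ℝ} (h : ∀ i, d i = e i) : conj hA d = conj hA e := by
  unfold conj; congr 1; · congr 1; exact congrArg _ (funext h)

lemma cfc_eq_conj (f : ℝ → ℝ) : hA.cfc f = conj hA (fun i => f (hA.eigenvalues i)) := by
  simp [Matrix.IsHermitian.cfc, conj, Function.comp_def]

lemma cfc_congr_matrix {A B : Matrix n n ℝ} (h : A = B) (hA : A.IsHermitian)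
    (hB : B.IsHermitian) (f : ℝ → ℝ) : hA.cfc f = hB.cfc f := by subst h; rfl

lemma star_mul_self_eigU :
    star (hA.eigenvectorUnitary : Matrix n n ℝ) * (hA.eigenvectorUnitary : Matrix n n ℝ) = 1 :=
  Unitary.star_mul_self_of_mem hA.eigenvectorUnitary.2

lemma mul_star_self_eigU :
    (hA.eigenvectorUnitary : Matrix n n ℝ) * star (hA.eigenvectorUnitary : Matrix n n ℝ) = 1 :=
  Unitary.mul_star_self_of_mem hA.eigenvectorUnitary.2

lemma conj_mul (d e : n → ℝ) : conj hA d * conj hA e = conj hA (fun i => d i * e i) := by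
  unfold conj
  rw [show ∀ a b c d' e' f : Matrix n n ℝ, (a*b*c)*(d'*e'*f) = a*(b*(c*d')*e')*f by
    intros; simp only [mul_assoc], star_mul_self_eigU hA, mul_one, diagonal_mul_diagonal]

lemma conj_add (d e : n → ℝ) : conj hA d + conj hA e = conj hA (fun i => d i + e i) := by
  unfold conj
  rw [← diagonal_add, mul_add, add_mul]

lemma conj_sub (d e : n → ℝ) : conj hA d - conj hA e = conj hA (fun i => d i - e i) := by
  unfold conj
  rw [← diagonal_sub, mul_sub, sub_mul]

lemma conj_smul (c : ℝ) (d : n → ℝ) : c • conj hA d = conj hA (fun i => c * d i) := by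
  rw [show (fun i => c * d i) = c • d from rfl]
  unfold conj
  rw [diagonal_smul, Matrix.mul_smul, Matrix.smul_mul]

lemma conj_one : conj hA (fun _ => 1) = 1 := by
  unfold conj
  rw [diagonal_one, mul_one, mul_star_self_eigU hA]

lemma spectral : A = conj hA hA.eigenvalues := by
  simpa [conj, Function.comp_def] using hA.spectral_theorem

lemma trace_conj (d : n → ℝ) : (conj hA d).trace = ∑ i, d i := by
  unfold conj
  rw [trace_mul_cycle, star_mul_self_eigU hA, one_mul, trace_diagonal]

lemma pow_eq_conj (m : ℕ) : A ^ m = conj hA (fun i => hA.eigenvalues i ^ m) := by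
  induction m with
  | zero => simpa using (conj_one hA).symm
  | succ k ih =>
      have h2 := conj_mul hA (fun i => hA.eigenvalues i ^ k) hA.eigenvalues
      rw [← spectral hA, ← ih] at h2
      rw [pow_succ, h2]
      exact conj_congr hA fun i => (pow_succ _ _).symm

lemma aeval_eq_conj (p : ℝ[X]) : aeval A p = conj hA (fun i => p.eval (hA.eigenvalues i)) := by
  induction p using Polynomial.induction_on' with
  | add p q hp hq =>
      rw [map_add, hp, hq, conj_add]
      exact conj_congr hA fun i => by simp
  | monomial m a =>
      rw [aeval_monomial, ← Algebra.smul_def, pow_eq_conj hA, conj_smul]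
      exact conj_congr hA fun i => by simp

/-! ### Quadratic form estimates -/

lemma abs_quadForm_le (B : Matrix n n ℝ) (v : n → ℝ) :
    |v ⬝ᵥ (B *ᵥ v)| ≤ (∑ i, ∑ j, |B i j|) * (v ⬝ᵥ v) := by
  have hvv : ∀ k, v k ^ 2 ≤ v ⬝ᵥ v := by
    intro k
    rw [dotProduct, show ∀ x:ℝ, x^2 = x*x by intro x; ring]
    exact Finset.single_le_sum (f := fun k => v k * v k)
      (fun i _ => mul_self_nonneg _) (Finset.mem_univ k)
  have key : ∀ i j, |v i * (B i j * v j)| ≤ |B i j| * (v ⬝ᵥ v) := by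
    intro i j
    have h1 : |v i * (B i j * v j)| = |B i j| * |v i * v j| := by
      rw [← abs_mul]; ring_nf
    rw [h1]
    refine mul_le_mul_of_nonneg_left ?_ (abs_nonneg _)
    rw [abs_mul]
    nlinarith [hvv i, hvv j, sq_abs (v i), sq_abs (v j), sq_nonneg (|v i| - |v j|)]
  calc |v ⬝ᵥ (B *ᵥ v)| = |∑ i, ∑ j, v i * (B i j * v j)| := by
        congr 1
        simp only [dotProduct, mulVec, Finset.mul_sum]
    _ ≤ ∑ i, ∑ j, |v i * (B i j * v j)| := by
        refine (Finset.abs_sum_le_sum_abs _ _).trans ?_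
        exact Finset.sum_le_sum fun i _ => Finset.abs_sum_le_sum_abs _ _
    _ ≤ ∑ i, ∑ j, |B i j| * (v ⬝ᵥ v) := by
        exact Finset.sum_le_sum fun i _ => Finset.sum_le_sum fun j _ => key i j
    _ = (∑ i, ∑ j, |B i j|) * (v ⬝ᵥ v) := by simp only [Finset.sum_mul]

lemma quadForm_conj (d : n → ℝ) (v : n → ℝ) :
    v ⬝ᵥ ((conj hA d) *ᵥ v) =
      ∑ i, d i * ((star (hA.eigenvectorUnitary : Matrix n n ℝ) *ᵥ v) i)^2 := by
  set U : Matrix n n ℝ := (hA.eigenvectorUnitary : Matrix n n ℝ) with hU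
  set w : n → ℝ := star U *ᵥ v with hw
  have hsU : star U = Uᵀ := by
    rw [star_eq_conjTranspose, conjTranspose_eq_transpose_of_trivial]
  have hvU : ∀ x : n → ℝ, v ⬝ᵥ (U *ᵥ x) = w ⬝ᵥ x := by
    intro x
    rw [dotProduct_mulVec, hw, hsU, mulVec_transpose]
  rw [conj, ← mulVec_mulVec, ← mulVec_mulVec, hvU, ← hw]
  simp only [dotProduct, mulVec_diagonal]
  exact Finset.sum_congr rfl fun i _ => by ring

lemma dotProduct_star_eigU (v : n → ℝ) :
    (star (hA.eigenvectorUnitary : Matrix n n ℝ) *ᵥ v) ⬝ᵥ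
      (star (hA.eigenvectorUnitary : Matrix n n ℝ) *ᵥ v) = v ⬝ᵥ v := by
  set U : Matrix n n ℝ := (hA.eigenvectorUnitary : Matrix n n ℝ) with hU
  have hsU : star U = Uᵀ := by
    rw [star_eq_conjTranspose, conjTranspose_eq_transpose_of_trivial]
  have h1 : star U *ᵥ v = v ᵥ* U := by rw [hsU, mulVec_transpose]
  rw [h1, ← dotProduct_mulVec, ← h1, mulVec_mulVec, mul_star_self_eigU hA, one_mulVec]

lemma eigenvalues_quadForm (i : n) :
    hA.eigenvalues i = ⇑(hA.eigenvectorBasis i) ⬝ᵥ (A *ᵥ ⇑(hA.eigenvectorBasis i)) := by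
  have := hA.eigenvalues_eq i
  simpa using this

lemma dotProduct_eigenvectorBasis (i : n) :
    ⇑(hA.eigenvectorBasis i) ⬝ᵥ ⇑(hA.eigenvectorBasis i) = 1 := by
  have h := hA.eigenvectorBasis.orthonormal.1 i
  have : (inner (𝕜 := ℝ) (hA.eigenvectorBasis i) (hA.eigenvectorBasis i)) = 1 := by
    rw [real_inner_self_eq_norm_sq, h]; norm_num
  rw [← this, PiLp.inner_apply]
  simp [dotProduct, sq]

/-- bound on `|Tr(conj hA d * B)|` when the `d i` are uniformly small. -/
lemma abs_trace_conj_mul_le (d : n → ℝ) (B : Matrix n n ℝ) {ε : ℝ} (hε : 0 ≤ ε)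
    (hd : ∀ i, |d i| ≤ ε) :
    |(conj hA d * B).trace| ≤ (Fintype.card n : ℝ) * ε * (∑ i, ∑ j, |B i j|) := by
  set U : Matrix n n ℝ := (hA.eigenvectorUnitary : Matrix n n ℝ) with hU
  have hcol : ∀ k, (fun i => U i k) ⬝ᵥ (fun i => U i k) = 1 := by
    intro k
    have : (star U * U) k k = (1 : Matrix n n ℝ) k k := by rw [star_mul_self_eigU hA]
    simp only [Matrix.mul_apply, Matrix.one_apply_eq] at this
    simpa [dotProduct, star_eq_conjTranspose, conjTranspose_apply] using this
  have hquadcol : ∀ k, |(star U * B * U) k k| ≤ ∑ i, ∑ j, |B i j| := by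
    intro k
    have he : (star U * B * U) k k = (fun i => U i k) ⬝ᵥ (B *ᵥ (fun i => U i k)) := by
      simp only [Matrix.mul_apply, dotProduct, mulVec, star_eq_conjTranspose,
        conjTranspose_apply, star_trivial, Finset.sum_mul, Finset.mul_sum]
      rw [Finset.sum_comm]
      exact Finset.sum_congr rfl fun i _ => Finset.sum_congr rfl fun j _ => by ring
    rw [he]
    have := abs_quadForm_le B (fun i => U i k)
    rwa [hcol k, mul_one] at this
  have htr : (conj hA d * B).trace = ∑ k, (star U * B * U) k k * d k := by
    rw [conj, show U * diagonal d * star U * B = (U * diagonal d) * (star U * B) by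
        simp only [mul_assoc], trace_mul_comm, Matrix.trace]
    simp only [diag_apply, Matrix.mul_assoc]
    refine Finset.sum_congr rfl fun k _ => ?_
    rw [show star U * (B * (U * diagonal d)) = (star U * (B * U)) * diagonal d by
        simp only [mul_assoc], Matrix.mul_diagonal]
  have hBn : (0:ℝ) ≤ ∑ i, ∑ j, |B i j| :=
    Finset.sum_nonneg fun i _ => Finset.sum_nonneg fun j _ => abs_nonneg _
  rw [htr]
  calc |∑ k, (star U * B * U) k k * d k| ≤ ∑ k, |(star U * B * U) k k * d k| :=
        Finset.abs_sum_le_sum_abs _ _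
    _ ≤ ∑ _k : n, (∑ i, ∑ j, |B i j|) * ε := by
        refine Finset.sum_le_sum fun k _ => ?_
        rw [abs_mul]
        exact mul_le_mul (hquadcol k) (hd k) (abs_nonneg _) hBn
    _ = (Fintype.card n : ℝ) * ε * (∑ i, ∑ j, |B i j|) := by
        rw [Finset.sum_const, Finset.card_univ, nsmul_eq_mul]
        ring

/-! ### Derivatives of polynomial matrix functions -/

attribute [local instance] Matrix.linftyOpNormedRing Matrix.linftyOpNormedAlgebra
  Matrix.linftyOpNormedAddCommGroup

lemma _root_.HasDerivAt.matrix_trace {M : ℝ → Matrix n n ℝ} {M' : Matrix n n ℝ} {t : ℝ}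
    (h : HasDerivAt M M' t) :
    HasDerivAt (fun u => (M u).trace) M'.trace t :=
  ((Matrix.traceLinearMap n ℝ ℝ).toContinuousLinearMap.hasFDerivAt.comp_hasDerivAt t h)

variable (X H : Matrix n n ℝ)

lemma hasDerivAt_S (t : ℝ) : HasDerivAt (fun u : ℝ => X + u • H) H t := by
  exact (((hasDerivAt_id' t).smul_const H).const_add X).congr_deriv (one_smul ℝ H)

lemma hasDerivAt_S_pow (m : ℕ) (t : ℝ) :
    HasDerivAt (fun u : ℝ => (X + u • H) ^ m)
      (∑ i ∈ Finset.range m, (X + t • H) ^ i * H * (X + t • H) ^ (m - 1 - i)) t := by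
  induction m with
  | zero =>
    simp only [pow_zero, Finset.range_zero, Finset.sum_empty]
    exact hasDerivAt_const t (1 : Matrix n n ℝ)
  | succ k ih =>
      have h : HasDerivAt (fun u : ℝ => (X + u • H) ^ k * (X + u • H)) _ t :=
        ih.mul (hasDerivAt_S X H t)
      have : (fun u : ℝ => (X + u • H) ^ k * (X + u • H)) =
          fun u : ℝ => (X + u • H) ^ (k + 1) := by
        funext u; rw [← pow_succ]
      rw [this] at h
      convert h using 1
      rw [Finset.sum_range_succ, Finset.sum_mul]
      congr 1
      · refine Finset.sum_congr rfl fun i hi => ?_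
        rw [Finset.mem_range] at hi
        simp only [mul_assoc, ← pow_succ]
        rw [show k + 1 - 1 - i = k - 1 - i + 1 from by omega]
      · simp

lemma trace_S_pow_deriv (m : ℕ) (t : ℝ) :
    (∑ i ∈ Finset.range m, (X + t • H) ^ i * H * (X + t • H) ^ (m - 1 - i)).trace
      = (m : ℝ) * ((X + t • H) ^ (m - 1) * H).trace := by
  rw [trace_sum]
  have : ∀ i ∈ Finset.range m, ((X + t • H) ^ i * H * (X + t • H) ^ (m - 1 - i)).trace
      = ((X + t • H) ^ (m - 1) * H).trace := by
    intro i hi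
    rw [Finset.mem_range] at hi
    rw [trace_mul_comm, ← mul_assoc, ← pow_add]
    congr 3
    omega
  rw [Finset.sum_congr rfl this, Finset.sum_const, Finset.card_range, nsmul_eq_mul]

lemma hasDerivAt_trace_aeval (p : ℝ[X]) (t : ℝ) :
    HasDerivAt (fun u : ℝ => (aeval (X + u • H) p).trace)
      ((aeval (X + t • H) (derivative p) * H).trace) t := by
  induction p using Polynomial.induction_on' with
  | add p q hp hq =>
      have := hp.add hq
      simp only [map_add, add_mul, trace_add] at this ⊢
      exact this
  | monomial m a =>
      have h1 := ((hasDerivAt_S_pow X H m t).matrix_trace).const_mul a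
      have e1 : (fun u : ℝ => a * ((X + u • H) ^ m).trace)
          = fun u : ℝ => (aeval (X + u • H) (monomial m a)).trace := by
        funext u
        rw [aeval_monomial, ← Algebra.smul_def, trace_smul, smul_eq_mul]
      rw [e1] at h1
      refine h1.congr_deriv ?_
      rw [trace_S_pow_deriv, derivative_monomial, aeval_monomial, ← Algebra.smul_def,
        smul_mul_assoc, trace_smul, smul_eq_mul]
      push_cast
      ring

/-! ### C¹ polynomial approximation of x log x -/

lemma exists_antideriv (q : ℝ[X]) (a c : ℝ) :
    ∃ P : ℝ[X], derivative P = q ∧ P.eval a = c := by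
  set P0 : ℝ[X] := q.sum fun i x => C (x / (i + 1)) * X ^ (i + 1) with hP0
  have hder : derivative P0 = q := by
    rw [hP0, Polynomial.sum, map_sum]
    conv_rhs => rw [← Polynomial.sum_C_mul_X_pow_eq q, Polynomial.sum]
    refine Finset.sum_congr rfl fun i _ => ?_
    rw [derivative_C_mul_X_pow, Nat.add_sub_cancel]
    congr 2
    push_cast
    field_simp
  exact ⟨P0 + C (c - P0.eval a), by simp [hder], by simp⟩

lemma hasDerivAt_xlogx {x : ℝ} (hx : x ≠ 0) :
    HasDerivAt (fun y : ℝ => y * Real.log y) (Real.log x + 1) x := by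
  have h := (hasDerivAt_id x).mul (Real.hasDerivAt_log hx)
  refine h.congr_deriv ?_
  simp [hx]

lemma exists_poly_C1_near (a b : ℝ) (ha : 0 < a) (hab : a ≤ b) {ε : ℝ} (hε : 0 < ε) :
    ∃ p : ℝ[X], (∀ x ∈ Icc a b, |p.eval x - x * Real.log x| ≤ ε * (b - a)) ∧
      (∀ x ∈ Icc a b, |(derivative p).eval x - (Real.log x + 1)| ≤ ε) := by
  have hcont : ContinuousOn (fun x : ℝ => Real.log x + 1) (Icc a b) := by
    apply ContinuousOn.add _ continuousOn_const
    exact Real.continuousOn_log.mono fun x hx => by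
      simp only [Set.mem_compl_iff, Set.mem_singleton_iff]
      exact ne_of_gt (lt_of_lt_of_le ha hx.1)
  obtain ⟨q, hq⟩ := exists_polynomial_near_of_continuousOn a b _ hcont ε hε
  obtain ⟨P, hPd, hPa⟩ := exists_antideriv q a (a * Real.log a)
  refine ⟨P, fun x hx => ?_, fun x hx => by rw [hPd]; exact (hq x hx).le⟩
  · have key : ∀ y ∈ Icc a b, HasDerivWithinAt
        (fun z => P.eval z - z * Real.log z)
        (q.eval y - (Real.log y + 1)) (Icc a b) y := by
      intro y hy
      exact ((hPd ▸ P.hasDerivAt y).sub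
        (hasDerivAt_xlogx (ne_of_gt (lt_of_lt_of_le ha hy.1)))).hasDerivWithinAt
    have bound : ∀ y ∈ Icc a b, ‖q.eval y - (Real.log y + 1)‖ ≤ ε :=
      fun y hy => (hq y hy).le
    have := (convex_Icc a b).norm_image_sub_le_of_norm_hasDerivWithin_le key bound
      (left_mem_Icc.mpr hab) hx
    rw [hPa] at this
    calc |P.eval x - x * Real.log x|
        = ‖(P.eval x - x * Real.log x) - (a * Real.log a - a * Real.log a)‖ := by
          rw [sub_self, sub_zero]; rfl
      _ ≤ ε * (b - a) := by
          have h2 : ‖x - a‖ ≤ b - a := by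
            rw [Real.norm_eq_abs, abs_of_nonneg (by linarith [hx.1])]
            linarith [hx.2]
          refine le_trans ?_ (mul_le_mul_of_nonneg_left h2 hε.le)
          convert this using 2

end VNAux

open VNAux

open Matrix

/-- Matrix logarithm of a real symmetric matrix, via the spectral decomposition:
apply the real logarithm to the eigenvalues. (Junk value `0` if not symmetric.) -/
noncomputable def matLog {n : Type*} [Fintype n] [DecidableEq n]
    (A : Matrix n n ℝ) : Matrix n n ℝ :=
  if h : A.IsHermitian then h.cfc Real.log else 0

/-- The von Neumann divergence `D_vN(X‖Y) = Tr(X log X − X log Y − X + Y)`. -/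
noncomputable def DvN {n : Type*} [Fintype n] [DecidableEq n]
    (X Y : Matrix n n ℝ) : ℝ :=
  (X * matLog X - X * matLog Y - X + Y).trace

/-- The symmetric (Jeffery) von Neumann divergence
`J_vN(X:Y) = (1/2)(D_vN(X‖Y) + D_vN(Y‖X))`. -/
noncomputable def JvN {n : Type*} [Fintype n] [DecidableEq n]
    (X Y : Matrix n n ℝ) : ℝ :=
  (1 / 2) * (DvN X Y + DvN Y X)

attribute [local instance] Matrix.linftyOpNormedRing Matrix.linftyOpNormedAlgebra
  Matrix.linftyOpNormedAddCommGroup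

/-- Differentiability of the von Neumann divergence in its first argument:
`t ↦ D_vN(X + tH ‖ Y)` is differentiable at `t = 0` with derivative
`Tr(H (log X − log Y))`. -/
theorem hasDerivAt_DvN_left {n : Type*} [Fintype n] [DecidableEq n]
    (X Y H : Matrix n n ℝ) (hX : X.PosDef) (hY : Y.PosDef) (hH : H.IsHermitian) :
    HasDerivAt (fun t : ℝ => DvN (X + t • H) Y)
      ((H * (matLog X - matLog Y)).trace) 0 := by
  rcases isEmpty_or_nonempty n with hemp | hne
  · have h1 : ∀ (M : Matrix n n ℝ), M.trace = 0 := fun M => by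
      simp [Matrix.trace]
    simp only [DvN, h1]
    exact hasDerivAt_const 0 0
  · -- setup
    have hSherm : ∀ t : ℝ, (X + t • H).IsHermitian := by
      intro t
      exact hX.1.add (by
        unfold Matrix.IsHermitian
        rw [conjTranspose_smul, hH.eq, star_trivial])
    set cH : ℝ := ∑ i, ∑ j, |H i j| with hcH
    set cX : ℝ := ∑ i, ∑ j, |X i j| with hcXdef
    have hcH0 : 0 ≤ cH :=
      Finset.sum_nonneg fun i _ => Finset.sum_nonneg fun j _ => abs_nonneg _
    have hcX0 : 0 ≤ cX :=
      Finset.sum_nonneg fun i _ => Finset.sum_nonneg fun j _ => abs_nonneg _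
    set a0 : ℝ := Finset.univ.inf' Finset.univ_nonempty hX.1.eigenvalues with ha0def
    have ha0 : 0 < a0 := by
      rw [ha0def, Finset.lt_inf'_iff]
      exact fun i _ => hX.eigenvalues_pos i
    set a : ℝ := a0 / 2 with hadef
    set b : ℝ := cX + a0 / 2 with hbdef
    set δ : ℝ := a0 / (2 * (cH + 1)) with hδdef
    have ha : 0 < a := by positivity
    have hab : a ≤ b := by rw [hadef, hbdef]; linarith
    have hδ : 0 < δ := by positivity
    have hvv0 : ∀ v : n → ℝ, 0 ≤ v ⬝ᵥ v := fun v =>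
      Finset.sum_nonneg fun i _ => mul_self_nonneg _
    -- lower bound for the quadratic form of X
    have hQXlow : ∀ v : n → ℝ, a0 * (v ⬝ᵥ v) ≤ v ⬝ᵥ (X *ᵥ v) := by
      intro v
      have h := quadForm_conj hX.1 hX.1.eigenvalues v
      rw [← spectral hX.1] at h
      rw [h, ← dotProduct_star_eigU hX.1 v]
      set w := star (hX.1.eigenvectorUnitary : Matrix n n ℝ) *ᵥ v with hw
      rw [dotProduct, Finset.mul_sum]
      refine Finset.sum_le_sum fun i _ => ?_
      have h1 : a0 ≤ hX.1.eigenvalues i := Finset.inf'_le _ (Finset.mem_univ i)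
      have h2 : w i * w i = w i ^ 2 := by ring
      rw [h2]
      exact mul_le_mul_of_nonneg_right h1 (sq_nonneg _)
    -- quadratic form bounds for S t, |t| < δ
    have hquad : ∀ t : ℝ, |t| < δ → ∀ v : n → ℝ,
        a * (v ⬝ᵥ v) ≤ v ⬝ᵥ ((X + t • H) *ᵥ v) ∧
        v ⬝ᵥ ((X + t • H) *ᵥ v) ≤ b * (v ⬝ᵥ v) := by
      intro t ht v
      have hsplit : v ⬝ᵥ ((X + t • H) *ᵥ v)
          = v ⬝ᵥ (X *ᵥ v) + t * (v ⬝ᵥ (H *ᵥ v)) := by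
        rw [add_mulVec, dotProduct_add, smul_mulVec, dotProduct_smul, smul_eq_mul]
      have h1 := hQXlow v
      have h1' := abs_quadForm_le X v
      have h2 := abs_quadForm_le H v
      have h3 : |t * (v ⬝ᵥ (H *ᵥ v))| ≤ δ * (cH * (v ⬝ᵥ v)) := by
        rw [abs_mul]
        exact mul_le_mul ht.le h2 (abs_nonneg _) hδ.le
      have hδc : δ * cH ≤ a0 / 2 := by
        rw [hδdef, div_mul_eq_mul_div, div_le_div_iff₀ (by positivity) (by norm_num : (0:ℝ) < 2)]
        nlinarith [ha0]
      have h4 : δ * (cH * (v ⬝ᵥ v)) ≤ a0 / 2 * (v ⬝ᵥ v) := by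
        rw [← mul_assoc]
        exact mul_le_mul_of_nonneg_right hδc (hvv0 v)
      have h5 := abs_le.mp h3
      have h6 := abs_le.mp h1'
      constructor
      · rw [hsplit, hadef]; nlinarith
      · rw [hsplit, hbdef]; nlinarith
    -- positive definiteness of S t
    have hpos : ∀ t : ℝ, |t| < δ → (X + t • H).PosDef := by
      intro t ht
      refine Matrix.PosDef.of_dotProduct_mulVec_pos (hSherm t) fun v hv => ?_
      have hvpos : 0 < v ⬝ᵥ v :=
        lt_of_le_of_ne (hvv0 v) (fun h => hv (dotProduct_self_eq_zero.mp h.symm))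
      have := (hquad t ht v).1
      have hsv : star v = v := by funext i; exact star_trivial _
      rw [hsv]
      nlinarith
    -- eigenvalue location
    have heig : ∀ t : ℝ, |t| < δ → ∀ i, (hSherm t).eigenvalues i ∈ Set.Icc a b := by
      intro t ht i
      have h1 := eigenvalues_quadForm (hSherm t) i
      have h2 := dotProduct_eigenvectorBasis (hSherm t) i
      have h3 := hquad t ht ⇑((hSherm t).eigenvectorBasis i)
      rw [h2] at h3
      rw [h1]
      constructor
      · simpa using h3.1
      · simpa using h3.2
    -- the approximating polynomials
    have hexists : ∀ k : ℕ, ∃ p : ℝ[X],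
        (∀ x ∈ Set.Icc a b, |p.eval x - x * Real.log x| ≤ (1/(k+1:ℝ)) * (b - a)) ∧
        (∀ x ∈ Set.Icc a b, |(Polynomial.derivative p).eval x - (Real.log x + 1)| ≤ 1/(k+1:ℝ)) :=
      fun k => exists_poly_C1_near a b ha hab (by positivity)
    choose p hp1 hp2 using hexists
    set s : Set ℝ := Metric.ball (0:ℝ) δ with hsdef
    have hmem : ∀ t : ℝ, t ∈ s → |t| < δ := by
      intro t ht
      rw [hsdef, Metric.mem_ball, Real.dist_eq, sub_zero] at ht
      exact ht
    have h0s : (0:ℝ) ∈ s := by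
      rw [hsdef, Metric.mem_ball, Real.dist_eq, sub_zero, abs_zero]; exact hδ
    set F : ℕ → ℝ → ℝ := fun k t => (Polynomial.aeval (X + t • H) (p k)).trace with hFdef
    set F' : ℕ → ℝ → ℝ :=
      fun k t => ((Polynomial.aeval (X + t • H) (Polynomial.derivative (p k))) * H).trace
      with hF'def
    set g : ℝ → ℝ :=
      fun t => ((hSherm t).cfc (fun x => Real.log x + 1) * H).trace with hgdef
    set φ₁ : ℝ → ℝ := fun t => ((X + t • H) * matLog (X + t • H)).trace with hφ₁def
    -- derivative of approximants
    have hF : ∀ k : ℕ, ∀ t ∈ s, HasDerivAt (F k) (F' k t) t := fun k t _ =>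
      hasDerivAt_trace_aeval X H (p k) t
    -- uniform convergence of derivatives
    have hub : ∀ (k : ℕ), ∀ t ∈ s,
        |F' k t - g t| ≤ (Fintype.card n : ℝ) * (1/(k+1:ℝ)) * cH := by
      intro k t ht
      have hd : F' k t - g t =
          ((conj (hSherm t) (fun i => (Polynomial.derivative (p k)).eval
              ((hSherm t).eigenvalues i) - (Real.log ((hSherm t).eigenvalues i) + 1))) * H).trace
          := by
        rw [hF'def, hgdef]
        simp only
        rw [aeval_eq_conj (hSherm t), cfc_eq_conj (hSherm t), ← trace_sub, ← sub_mul,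
          conj_sub]
      rw [hd]
      exact abs_trace_conj_mul_le (hSherm t) _ H (by positivity)
        (fun i => hp2 k _ (heig t (hmem t ht) i))
    have hunif : TendstoUniformlyOn F' g atTop s := by
      rw [Metric.tendstoUniformlyOn_iff]
      intro ε hε
      have hc : Tendsto (fun k : ℕ => (Fintype.card n : ℝ) * (1/(k+1:ℝ)) * cH) atTop (𝓝 0) := by
        have h := tendsto_one_div_add_atTop_nhds_zero_nat (𝕜 := ℝ)
        have h2 := (h.const_mul ((Fintype.card n : ℝ))).mul_const cH
        simpa using h2
      filter_upwards [hc.eventually (gt_mem_nhds hε)] with k hk t ht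
      rw [Real.dist_eq, abs_sub_comm]
      exact lt_of_le_of_lt (hub k t ht) hk
    -- pointwise convergence
    have hphi : ∀ t ∈ s, φ₁ t = ∑ i, (hSherm t).eigenvalues i
        * Real.log ((hSherm t).eigenvalues i) := by
      intro t ht
      rw [hφ₁def]
      simp only
      rw [matLog, dif_pos (hSherm t), cfc_eq_conj (hSherm t)]
      nth_rewrite 1 [spectral (hSherm t)]
      rw [VNAux.conj_mul, VNAux.trace_conj]
    have hpt : ∀ t ∈ s, Tendsto (fun k => F k t) atTop (𝓝 (φ₁ t)) := by
      intro t ht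
      have hFt : ∀ k, F k t = ∑ i, (p k).eval ((hSherm t).eigenvalues i) := by
        intro k
        rw [hFdef]
        simp only
        rw [aeval_eq_conj (hSherm t), VNAux.trace_conj]
      have hbound : ∀ k : ℕ, ‖F k t - φ₁ t‖
          ≤ (Fintype.card n : ℝ) * ((1/(k+1:ℝ)) * (b - a)) := by
        intro k
        rw [hFt k, hphi t ht, ← Finset.sum_sub_distrib, Real.norm_eq_abs]
        calc |∑ i, ((p k).eval ((hSherm t).eigenvalues i)
              - (hSherm t).eigenvalues i * Real.log ((hSherm t).eigenvalues i))|
            ≤ ∑ i, |(p k).eval ((hSherm t).eigenvalues i)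
              - (hSherm t).eigenvalues i * Real.log ((hSherm t).eigenvalues i)| :=
              Finset.abs_sum_le_sum_abs _ _
          _ ≤ ∑ _i : n, (1/(k+1:ℝ)) * (b - a) :=
              Finset.sum_le_sum fun i _ => hp1 k _ (heig t (hmem t ht) i)
          _ = (Fintype.card n : ℝ) * ((1/(k+1:ℝ)) * (b - a)) := by
              rw [Finset.sum_const, Finset.card_univ, nsmul_eq_mul]
      have hz : Tendsto (fun k : ℕ => F k t - φ₁ t) atTop (𝓝 0) := by
        refine squeeze_zero_norm hbound ?_
        have h := tendsto_one_div_add_atTop_nhds_zero_nat (𝕜 := ℝ)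
        have h2 := (h.mul_const (b - a)).const_mul ((Fintype.card n : ℝ))
        simpa using h2
      have := hz.add_const (φ₁ t)
      simpa using this
    -- main derivative
    have main1 : HasDerivAt φ₁ (g 0) 0 :=
      hasDerivAt_of_tendstoUniformlyOn Metric.isOpen_ball hunif
        (Filter.Eventually.of_forall hF) hpt h0s
    -- identify g 0
    have hg0 : g 0 = (H * (matLog X + 1)).trace := by
      rw [hgdef]
      simp only
      have h1 : (hSherm 0).cfc (fun x => Real.log x + 1)
          = hX.1.cfc (fun x => Real.log x + 1) :=
        cfc_congr_matrix (by simp) _ _ _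
      have h2 : hX.1.cfc (fun x => Real.log x + 1) = matLog X + 1 := by
        rw [matLog, dif_pos hX.1, cfc_eq_conj hX.1, cfc_eq_conj hX.1, ← conj_one hX.1,
          conj_add]
      rw [h1, h2, trace_mul_comm]
    -- other terms
    have D2 : HasDerivAt (fun t : ℝ => ((X + t • H) * matLog Y).trace)
        ((H * matLog Y).trace) 0 :=
      ((hasDerivAt_S X H 0).mul_const (matLog Y)).matrix_trace
    have D3 : HasDerivAt (fun t : ℝ => (X + t • H).trace) H.trace 0 :=
      (hasDerivAt_S X H 0).matrix_trace
    have total := ((main1.sub D2).sub D3).add_const Y.trace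
    have hfun : (fun t : ℝ => DvN (X + t • H) Y)
        = fun t : ℝ => φ₁ t - ((X + t • H) * matLog Y).trace - (X + t • H).trace
          + Y.trace := by
      funext t
      rw [DvN, hφ₁def]
      simp only [trace_add, trace_sub]
    rw [hfun]
    refine total.congr_deriv ?_
    rw [hg0, mul_sub, mul_add, mul_one, trace_sub, trace_add]
    ring
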